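/- Let ω be a primitive cube root of unity in ℂ. Then as an identity of formal power series in three commuting variables x, y, t over ℂ: (1/3) Σ_{i=0}^{2} (1 + ω^i x y t⁶)/((1 − x t²)(1 − ω^i y t²)(1 − y² t⁴)(1 − x² t⁸)) = (1 − x² y⁶ t²⁰)/((1 − x t²)(1 − y² t⁴)(1 − y³ t⁶)(1 − x² t⁸)(1 − x y³ t¹⁰)). -/

import Mathlib

open MvPowerSeries in
/-- ℤ₃ averaging of the HWG of `n.min B₃` restricted to `G₂` gives the HWG of the
sub-regular nilpotent orbit closure of `G₂`, as formal power series in `x, y, t`. -/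
theorem z3averagingSubregG2 (ω : ℂ) (hω : IsPrimitiveRoot ω 3) :
    (3 : ℂ)⁻¹ • ∑ i ∈ Finset.range 3,
        ((1 + C (σ := Fin 3) (R := ℂ) (ω ^ i) * (X 0 * X 1 * (X 2) ^ 6)) *
          ((1 - X 0 * (X 2) ^ 2)⁻¹ * (1 - C (σ := Fin 3) (R := ℂ) (ω ^ i) * (X 1 * (X 2) ^ 2))⁻¹ *
            ((1 - (X 1) ^ 2 * (X 2) ^ 4)⁻¹ * (1 - (X 0) ^ 2 * (X 2) ^ 8)⁻¹)))
      = (1 - (X 0 : MvPowerSeries (Fin 3) ℂ) ^ 2 * (X 1) ^ 6 * (X 2) ^ 20) *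
          ((1 - X 0 * (X 2) ^ 2)⁻¹ * (1 - (X 1) ^ 2 * (X 2) ^ 4)⁻¹ *
            ((1 - (X 1) ^ 3 * (X 2) ^ 6)⁻¹ * (1 - (X 0) ^ 2 * (X 2) ^ 8)⁻¹ *
              (1 - X 0 * (X 1) ^ 3 * (X 2) ^ 10)⁻¹)) := by
  have hω3 : ω ^ 3 = 1 := hω.pow_eq_one
  have hωs : ω ^ 2 + ω + 1 = 0 := by
    have h1 : ω ≠ 1 := hω.ne_one (by norm_num)
    have h2 : (ω - 1) * (ω ^ 2 + ω + 1) = 0 := by linear_combination hω3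
    rcases mul_eq_zero.mp h2 with h | h
    · exact absurd (sub_eq_zero.mp h) h1
    · exact h
  set W : MvPowerSeries (Fin 3) ℂ := C (σ := Fin 3) (R := ℂ) ω with hWdef
  have hW3 : W ^ 3 = 1 := by rw [hWdef, ← map_pow, hω3, map_one]
  have hW2 : W ^ 2 + W + 1 = 0 := by
    have := congrArg (C (σ := Fin 3) (R := ℂ)) hωs
    simpa [map_add, map_pow, map_one, map_zero] using this
  have hccF : constantCoeff (σ := Fin 3) (R := ℂ) (1 - (X 1) ^ 3 * (X 2) ^ 6) ≠ 0 := by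
    simp [map_sub, map_mul, map_pow]
  have hF : (1 - (X 1 : MvPowerSeries (Fin 3) ℂ) ^ 3 * (X 2) ^ 6) *
      (1 - (X 1) ^ 3 * (X 2) ^ 6)⁻¹ = 1 := MvPowerSeries.mul_inv_cancel _ hccF
  have hG : (1 - (X 0 : MvPowerSeries (Fin 3) ℂ) * (X 1) ^ 3 * (X 2) ^ 10) *
      (1 - X 0 * (X 1) ^ 3 * (X 2) ^ 10)⁻¹ = 1 :=
    MvPowerSeries.mul_inv_cancel _ (by simp [map_sub, map_mul, map_pow])
  have hz0 : (1 - (X 1 : MvPowerSeries (Fin 3) ℂ) * (X 2) ^ 2)⁻¹ =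
      (1 + X 1 * (X 2) ^ 2 + (X 1) ^ 2 * (X 2) ^ 4) * (1 - (X 1) ^ 3 * (X 2) ^ 6)⁻¹ := by
    rw [MvPowerSeries.inv_eq_iff_mul_eq_one (by simp [map_sub, map_mul, map_pow])]
    linear_combination hF
  have hz1 : (1 - W * (X 1 * (X 2) ^ 2))⁻¹ =
      (1 + W * (X 1 * (X 2) ^ 2) + W ^ 2 * ((X 1) ^ 2 * (X 2) ^ 4)) *
        (1 - (X 1) ^ 3 * (X 2) ^ 6)⁻¹ := by
    rw [MvPowerSeries.inv_eq_iff_mul_eq_one (by simp [map_sub, map_mul, map_pow, hWdef])]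
    linear_combination hF - ((1 - (X 1 : MvPowerSeries (Fin 3) ℂ) ^ 3 * (X 2) ^ 6)⁻¹ *
      ((X 1) ^ 3 * (X 2) ^ 6)) * hW3
  have hz2 : (1 - W ^ 2 * (X 1 * (X 2) ^ 2))⁻¹ =
      (1 + W ^ 2 * (X 1 * (X 2) ^ 2) + W * ((X 1) ^ 2 * (X 2) ^ 4)) *
        (1 - (X 1) ^ 3 * (X 2) ^ 6)⁻¹ := by
    rw [MvPowerSeries.inv_eq_iff_mul_eq_one (by simp [map_sub, map_mul, map_pow, hWdef])]
    linear_combination hF - ((1 - (X 1 : MvPowerSeries (Fin 3) ℂ) ^ 3 * (X 2) ^ 6)⁻¹ *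
      ((X 1) ^ 3 * (X 2) ^ 6 + W * ((X 1) ^ 2 * (X 2) ^ 4))) * hW3
  rw [inv_smul_eq_iff₀ (by norm_num : (3:ℂ) ≠ 0), Finset.sum_range_succ, Finset.sum_range_succ,
    Finset.sum_range_one, Algebra.smul_def]
  simp only [pow_zero, pow_one, map_one, one_mul, map_pow, map_ofNat, ← hWdef]
  linear_combination
    ((1 + X 0 * X 1 * (X 2 : MvPowerSeries (Fin 3) ℂ) ^ 6) *
      ((1 - X 0 * (X 2) ^ 2)⁻¹ * ((1 - (X 1) ^ 2 * (X 2) ^ 4)⁻¹ * (1 - (X 0) ^ 2 * (X 2) ^ 8)⁻¹))) * hz0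
    + ((1 + W * (X 0 * X 1 * (X 2) ^ 6)) *
      ((1 - X 0 * (X 2) ^ 2)⁻¹ * ((1 - (X 1) ^ 2 * (X 2) ^ 4)⁻¹ * (1 - (X 0) ^ 2 * (X 2) ^ 8)⁻¹))) * hz1
    + ((1 + W ^ 2 * (X 0 * X 1 * (X 2) ^ 6)) *
      ((1 - X 0 * (X 2) ^ 2)⁻¹ * ((1 - (X 1) ^ 2 * (X 2) ^ 4)⁻¹ * (1 - (X 0) ^ 2 * (X 2) ^ 8)⁻¹))) * hz2
    + ((1 - X 0 * (X 2) ^ 2)⁻¹ * (1 - (X 1) ^ 3 * (X 2) ^ 6)⁻¹ *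
        ((1 - (X 1) ^ 2 * (X 2) ^ 4)⁻¹ * (1 - (X 0) ^ 2 * (X 2) ^ 8)⁻¹) *
        (X 1 * (X 2) ^ 2 + (X 1) ^ 2 * (X 2) ^ 4 + X 0 * X 1 * (X 2) ^ 6
          + X 0 * (X 1) ^ 2 * (X 2) ^ 8)) * hW2
    + ((1 - X 0 * (X 2) ^ 2)⁻¹ * (1 - (X 1) ^ 3 * (X 2) ^ 6)⁻¹ *
        ((1 - (X 1) ^ 2 * (X 2) ^ 4)⁻¹ * (1 - (X 0) ^ 2 * (X 2) ^ 8)⁻¹) *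
        (W * (X 0 * (X 1) ^ 2 * (X 2) ^ 8) + 2 * (X 0 * (X 1) ^ 3 * (X 2) ^ 10))) * hW3
    - (3 * (1 + X 0 * (X 1) ^ 3 * (X 2) ^ 10) *
        ((1 - X 0 * (X 2) ^ 2)⁻¹ * (1 - (X 1) ^ 2 * (X 2) ^ 4)⁻¹ *
          ((1 - (X 1) ^ 3 * (X 2) ^ 6)⁻¹ * (1 - (X 0) ^ 2 * (X 2) ^ 8)⁻¹))) * hG
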